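/- For all α ∈ (0,1) and all interval partitions β₁, β₂, γ₁, γ₂ ∈ I_α with α-diversity, the α-diversity metric satisfies both inequalities |d_α(β₂, γ₂) − d_α(β₁, γ₁)| ≤ d_α(β₁ ⋆ β₂, γ₁ ⋆ γ₂) ≤ d_α(β₁, γ₁) + d_α(β₂, γ₂), where ⋆ denotes concatenation of interval partitions. -/

import Mathlib

open MeasureTheory Filter Topology Set

/-- `β` is an interval partition of `[0, M]`: a collection of disjoint open
subintervals of `[0, M]` (encoded by their endpoint pairs) whose union has
full Lebesgue measure in `[0, M]`. -/
def IsIntervalPartition (M : ℝ) (β : Set (ℝ × ℝ)) : Prop :=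
  0 ≤ M ∧ (∀ p ∈ β, 0 ≤ p.1 ∧ p.1 < p.2 ∧ p.2 ≤ M) ∧
    β.PairwiseDisjoint (fun p => Set.Ioo p.1 p.2) ∧
    volume (Set.Icc (0 : ℝ) M \ ⋃ p ∈ β, Set.Ioo p.1 p.2) = 0

/-- The `α`-diversity of `β` at `t`:
`Γ(1-α) · lim_{h ↓ 0} h^α · #{(a,b) ∈ β : b - a > h, b ≤ t}` (via `limUnder`). -/
noncomputable def diversity (α : ℝ) (β : Set (ℝ × ℝ)) (t : ℝ) : ℝ :=
  limUnder (𝓝[>] (0 : ℝ))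
    (fun h => Real.Gamma (1 - α) * h ^ α *
      ({p ∈ β | h < p.2 - p.1 ∧ p.2 ≤ t}.ncard : ℝ))

/-- `β` has the `α`-diversity property: the defining limit exists at every `t ∈ [0, M]`. -/
def HasDiversity (α M : ℝ) (β : Set (ℝ × ℝ)) : Prop :=
  ∀ t ∈ Set.Icc (0 : ℝ) M, ∃ D : ℝ,
    Tendsto (fun h => Real.Gamma (1 - α) * h ^ α *
        ({p ∈ β | h < p.2 - p.1 ∧ p.2 ≤ t}.ncard : ℝ))
      (𝓝[>] (0 : ℝ)) (𝓝 D)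

/-- A strictly increasing (in the left-to-right order) finite sequence of blocks. -/
def BlocksStrictMono {n : ℕ} (U : Fin n → ℝ × ℝ) : Prop :=
  ∀ i j : Fin n, i < j → (U i).2 ≤ (U j).1

/-- The `α`-distortion of a correspondence `(U_j, V_j)_{j ∈ [n]}` from `β` (an interval
partition of `[0, Mβ]`) to `γ` (an interval partition of `[0, Mγ]`): the maximum of the
four quantities (i)-(iv). -/
noncomputable def distortion (α Mβ Mγ : ℝ) (β γ : Set (ℝ × ℝ)) {n : ℕ}
    (U V : Fin n → ℝ × ℝ) : ℝ :=
  max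
    (max
      ((∑ j, |((U j).2 - (U j).1) - ((V j).2 - (V j).1)|) + Mβ - ∑ j, ((U j).2 - (U j).1))
      ((∑ j, |((U j).2 - (U j).1) - ((V j).2 - (V j).1)|) + Mγ - ∑ j, ((V j).2 - (V j).1)))
    (max
      (⨆ j : Fin n, |diversity α β (U j).1 - diversity α γ (V j).1|)
      |diversity α β Mβ - diversity α γ Mγ|)

/-- The distance `d_α`: the infimum of the `α`-distortion over all correspondences. -/
noncomputable def dAlpha (α Mβ Mγ : ℝ) (β γ : Set (ℝ × ℝ)) : ℝ :=
  sInf {d : ℝ | ∃ (n : ℕ) (U V : Fin n → ℝ × ℝ),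
    (∀ j, U j ∈ β) ∧ (∀ j, V j ∈ γ) ∧ BlocksStrictMono U ∧ BlocksStrictMono V ∧
    d = distortion α Mβ Mγ β γ U V}

/-- The concatenation `β ⋆ γ`, where `β` is an interval partition of `[0, M]`:
the blocks of `β` together with the blocks of `γ` translated by `M`. -/
def ipConcat (M : ℝ) (β γ : Set (ℝ × ℝ)) : Set (ℝ × ℝ) :=
  β ∪ (fun p : ℝ × ℝ => (p.1 + M, p.2 + M)) '' γ

lemma sumLen_le {n : ℕ} {A B : ℝ} (U : Fin n → ℝ × ℝ) (hAB : A ≤ B)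
    (hblk : ∀ j, A ≤ (U j).1 ∧ (U j).1 < (U j).2 ∧ (U j).2 ≤ B)
    (hmono : BlocksStrictMono U) : ∑ j, ((U j).2 - (U j).1) ≤ B - A := by
  induction n generalizing B with
  | zero => simp; linarith
  | succ n ih =>
    rw [Fin.sum_univ_castSucc]
    have h1 : ∑ j : Fin n, ((U j.castSucc).2 - (U j.castSucc).1) ≤ (U (Fin.last n)).1 - A := by
      refine ih (fun j => U j.castSucc) (hblk (Fin.last n)).1 ?_ ?_
      · intro j
        refine ⟨(hblk j.castSucc).1, (hblk j.castSucc).2.1, ?_⟩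
        exact hmono j.castSucc (Fin.last n) (Fin.castSucc_lt_last j)
      · intro i j hij
        exact hmono i.castSucc j.castSucc (by simpa using hij)
    have h2 := hblk (Fin.last n)
    linarith

lemma sum_finset_orderIso {n : ℕ} (t : Finset (Fin n)) (f : Fin n → ℝ) :
    ∑ k : Fin t.card, f ((t.orderIsoOfFin rfl) k : Fin n) = ∑ j ∈ t, f j := by
  calc ∑ k : Fin t.card, f ((t.orderIsoOfFin rfl) k : Fin n)
      = ∑ x : {x // x ∈ t}, f x :=
        Fintype.sum_equiv (t.orderIsoOfFin rfl).toEquiv _ _ (fun k => rfl)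
    _ = ∑ j ∈ t, f j := by
        rw [← Finset.sum_attach t f, Finset.univ_eq_attach]

lemma sumLen_finset_le {n : ℕ} {A B : ℝ} (W : Fin n → ℝ × ℝ) (t : Finset (Fin n)) (hAB : A ≤ B)
    (hmono : BlocksStrictMono W)
    (hblk : ∀ j ∈ t, A ≤ (W j).1 ∧ (W j).1 < (W j).2 ∧ (W j).2 ≤ B) :
    ∑ j ∈ t, ((W j).2 - (W j).1) ≤ B - A := by
  rw [← sum_finset_orderIso t (fun j => (W j).2 - (W j).1)]
  refine sumLen_le (fun k => W ((t.orderIsoOfFin rfl) k : Fin n)) hAB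
    (fun k => hblk _ ((t.orderIsoOfFin rfl) k).2) ?_
  intro i j hij
  exact hmono _ _ (by exact_mod_cast (t.orderIsoOfFin rfl).strictMono hij)

lemma cross_excl {n : ℕ} {M₁ N₁ : ℝ} (W X : Fin n → ℝ × ℝ)
    (hWlt : ∀ j, (W j).1 < (W j).2) (hXlt : ∀ j, (X j).1 < (X j).2)
    (hWm : BlocksStrictMono W) (hXm : BlocksStrictMono X) (j j' : Fin n)
    (h1 : (W j).2 ≤ M₁) (h2 : N₁ < (X j).2) (h3 : M₁ < (W j').2) (h4 : (X j').2 ≤ N₁) :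
    False := by
  rcases lt_trichotomy j j' with h | h | h
  · have := hXm j j' h; have := hXlt j'; linarith
  · subst h; linarith
  · have := hWm j' j h; have := hWlt j; linarith

lemma count_fin {M : ℝ} {β : Set (ℝ × ℝ)} (hβ : IsIntervalPartition M β) {h : ℝ}
    (hh : 0 < h) (t : ℝ) : {p ∈ β | h < p.2 - p.1 ∧ p.2 ≤ t}.Finite := by
  refine Set.Finite.subset (s := {p ∈ β | h < p.2 - p.1}) ?_ (fun p hp => ⟨hp.1, hp.2.1⟩)
  by_contra hinf
  replace hinf : {p ∈ β | h < p.2 - p.1}.Infinite := hinf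
  obtain ⟨F, hFsub, hFcard⟩ := hinf.exists_subset_card_eq (⌈M / h⌉₊ + 1)
  have hdisj : (↑F : Set (ℝ × ℝ)).PairwiseDisjoint (fun p => Set.Ioo p.1 p.2) :=
    hβ.2.2.1.subset (fun p hp => (hFsub hp).1)
  have hmeas : volume (⋃ p ∈ F, Set.Ioo p.1 p.2) = ∑ p ∈ F, volume (Set.Ioo p.1 p.2) :=
    measure_biUnion_finset hdisj (fun p _ => measurableSet_Ioo)
  have hsub : (⋃ p ∈ F, Set.Ioo p.1 p.2) ⊆ Set.Icc (0:ℝ) M := by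
    intro x hx
    simp only [Set.mem_iUnion] at hx
    obtain ⟨p, hpF, hxp⟩ := hx
    have hb := hβ.2.1 p (hFsub hpF).1
    exact ⟨le_of_lt (lt_of_le_of_lt hb.1 hxp.1), le_of_lt (lt_of_lt_of_le hxp.2 hb.2.2)⟩
  have hle : ∑ p ∈ F, volume (Set.Ioo p.1 p.2) ≤ ENNReal.ofReal M := by
    rw [← hmeas]
    calc volume (⋃ p ∈ F, Set.Ioo p.1 p.2) ≤ volume (Set.Icc (0:ℝ) M) :=
          measure_mono hsub
      _ = ENNReal.ofReal M := by rw [Real.volume_Icc]; ring_nf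
  have hge : (F.card : ENNReal) * ENNReal.ofReal h ≤ ∑ p ∈ F, volume (Set.Ioo p.1 p.2) := by
    have := Finset.card_nsmul_le_sum F (fun p => volume (Set.Ioo p.1 p.2)) (ENNReal.ofReal h) ?_
    · simpa [nsmul_eq_mul] using this
    · intro p hp
      show ENNReal.ofReal h ≤ volume (Ioo p.1 p.2)
      rw [Real.volume_Ioo]
      exact ENNReal.ofReal_le_ofReal (le_of_lt (hFsub hp).2)
  have hfinal : ((F.card : ℝ) * h) ≤ M := by
    rw [← ENNReal.ofReal_le_ofReal_iff hβ.1, ENNReal.ofReal_mul (by positivity),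
      ENNReal.ofReal_natCast]
    exact le_trans hge hle
  rw [hFcard] at hfinal
  have : (M / h) < ((⌈M / h⌉₊ + 1 : ℕ) : ℝ) := by
    push_cast
    have := Nat.le_ceil (M / h)
    linarith
  rw [div_lt_iff₀ hh] at this
  linarith

/-- Blocks of a concatenation: either a `β₁`-block (with right end `≤ M₁`) or a
translated `β₂`-block (with right end `> M₁`). -/
lemma concat_cases {M₁ M₂ : ℝ} {β₁ β₂ : Set (ℝ × ℝ)}
    (hβ₁ : IsIntervalPartition M₁ β₁) (hβ₂ : IsIntervalPartition M₂ β₂)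
    {p : ℝ × ℝ} (hp : p ∈ ipConcat M₁ β₁ β₂) :
    (p ∈ β₁ ∧ p.2 ≤ M₁) ∨ (∃ q ∈ β₂, p = (q.1 + M₁, q.2 + M₁) ∧ M₁ < p.2) := by
  rcases hp with hp | ⟨q, hq, rfl⟩
  · exact Or.inl ⟨hp, (hβ₁.2.1 p hp).2.2⟩
  · refine Or.inr ⟨q, hq, rfl, ?_⟩
    have hb := hβ₂.2.1 q hq
    simp only
    linarith [hb.1, hb.2.1]

lemma concat_block {M₁ M₂ : ℝ} {β₁ β₂ : Set (ℝ × ℝ)}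
    (hβ₁ : IsIntervalPartition M₁ β₁) (hβ₂ : IsIntervalPartition M₂ β₂)
    {p : ℝ × ℝ} (hp : p ∈ ipConcat M₁ β₁ β₂) :
    0 ≤ p.1 ∧ p.1 < p.2 ∧ p.2 ≤ M₁ + M₂ := by
  rcases hp with hp | ⟨q, hq, rfl⟩
  · have hb := hβ₁.2.1 p hp
    exact ⟨hb.1, hb.2.1, by linarith [hb.2.2, hβ₂.1]⟩
  · have hb := hβ₂.2.1 q hq
    exact ⟨by simpa using le_trans hβ₁.1 (by linarith [hb.1] : M₁ ≤ q.1 + M₁),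
      by simpa using hb.2.1, by simpa using (by linarith [hb.2.2] : q.2 + M₁ ≤ M₁ + M₂)⟩

/-- For `t ≤ M₁`, the diversity of the concatenation agrees with that of `β₁`. -/
lemma diversity_concat_left {α M₁ M₂ : ℝ} {β₁ β₂ : Set (ℝ × ℝ)}
    (hβ₂ : IsIntervalPartition M₂ β₂) {t : ℝ} (ht : t ≤ M₁) :
    diversity α (ipConcat M₁ β₁ β₂) t = diversity α β₁ t := by
  unfold diversity
  congr 1
  funext h
  congr 2
  have : {p ∈ ipConcat M₁ β₁ β₂ | h < p.2 - p.1 ∧ p.2 ≤ t}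
      = {p ∈ β₁ | h < p.2 - p.1 ∧ p.2 ≤ t} := by
    ext p
    constructor
    · rintro ⟨hp | ⟨q, hq, rfl⟩, hc⟩
      · exact ⟨hp, hc⟩
      · exfalso
        have hb := hβ₂.2.1 q hq
        have : q.2 + M₁ ≤ t := hc.2
        linarith [hb.1, hb.2.1]
    · rintro ⟨hp, hc⟩
      exact ⟨Or.inl hp, hc⟩
  rw [this]

/-- For `0 ≤ s ≤ M₂`, `𝒟_{β₁⋆β₂}(M₁+s) = 𝒟_{β₁}(M₁) + 𝒟_{β₂}(s)`. -/
lemma diversity_concat_right {α M₁ M₂ : ℝ} {β₁ β₂ : Set (ℝ × ℝ)}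
    (hβ₁ : IsIntervalPartition M₁ β₁) (hβ₂ : IsIntervalPartition M₂ β₂)
    (hd₁ : HasDiversity α M₁ β₁) (hd₂ : HasDiversity α M₂ β₂)
    {s : ℝ} (hs : s ∈ Set.Icc (0:ℝ) M₂) :
    diversity α (ipConcat M₁ β₁ β₂) (M₁ + s) = diversity α β₁ M₁ + diversity α β₂ s := by
  obtain ⟨D₁, hD₁⟩ := hd₁ M₁ ⟨hβ₁.1, le_refl _⟩
  obtain ⟨D₂, hD₂⟩ := hd₂ s hs
  have key : ∀ h : ℝ, 0 < h →
      Real.Gamma (1 - α) * h ^ α *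
        ({p ∈ ipConcat M₁ β₁ β₂ | h < p.2 - p.1 ∧ p.2 ≤ M₁ + s}.ncard : ℝ)
      = Real.Gamma (1 - α) * h ^ α * ({p ∈ β₁ | h < p.2 - p.1 ∧ p.2 ≤ M₁}.ncard : ℝ)
        + Real.Gamma (1 - α) * h ^ α * ({p ∈ β₂ | h < p.2 - p.1 ∧ p.2 ≤ s}.ncard : ℝ) := by
    intro h hh
    have hset : {p ∈ ipConcat M₁ β₁ β₂ | h < p.2 - p.1 ∧ p.2 ≤ M₁ + s}
        = {p ∈ β₁ | h < p.2 - p.1 ∧ p.2 ≤ M₁} ∪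
          ((fun q : ℝ × ℝ => (q.1 + M₁, q.2 + M₁)) '' {q ∈ β₂ | h < q.2 - q.1 ∧ q.2 ≤ s}) := by
      ext p
      constructor
      · rintro ⟨hp | ⟨q, hq, rfl⟩, hlen, hle⟩
        · exact Or.inl ⟨hp, hlen, (hβ₁.2.1 p hp).2.2⟩
        · refine Or.inr ⟨q, ⟨hq, by simpa using hlen,
            by have : q.2 + M₁ ≤ M₁ + s := hle; linarith⟩, rfl⟩
      · rintro (⟨hp, hlen, hle⟩ | ⟨q, ⟨hq, hlen, hle⟩, rfl⟩)
        · exact ⟨Or.inl hp, hlen, by linarith [hs.1]⟩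
        · exact ⟨Or.inr ⟨q, hq, rfl⟩, by simpa using hlen,
            by show q.2 + M₁ ≤ M₁ + s; linarith⟩
    have hinj : Function.Injective (fun q : ℝ × ℝ => (q.1 + M₁, q.2 + M₁)) := by
      intro a b hab
      simp only [Prod.mk.injEq] at hab
      exact Prod.ext (by linarith [hab.1]) (by linarith [hab.2])
    have hdisj : Disjoint {p ∈ β₁ | h < p.2 - p.1 ∧ p.2 ≤ M₁}
        ((fun q : ℝ × ℝ => (q.1 + M₁, q.2 + M₁)) '' {q ∈ β₂ | h < q.2 - q.1 ∧ q.2 ≤ s}) := by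
      rw [Set.disjoint_left]
      rintro p ⟨_, _, hle⟩ ⟨q, ⟨hq, _, _⟩, rfl⟩
      have hb := hβ₂.2.1 q hq
      simp only at hle
      linarith [hb.1, hb.2.1]
    have hcard : ({p ∈ ipConcat M₁ β₁ β₂ | h < p.2 - p.1 ∧ p.2 ≤ M₁ + s}.ncard : ℝ)
        = ({p ∈ β₁ | h < p.2 - p.1 ∧ p.2 ≤ M₁}.ncard : ℝ)
          + ({q ∈ β₂ | h < q.2 - q.1 ∧ q.2 ≤ s}.ncard : ℝ) := by
      rw [hset, Set.ncard_union_eq hdisj (count_fin hβ₁ hh M₁)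
        ((count_fin hβ₂ hh s).image _), Set.ncard_image_of_injective _ hinj]
      push_cast
      ring
    rw [hcard]
    ring
  have hev : (fun h => Real.Gamma (1 - α) * h ^ α *
        ({p ∈ ipConcat M₁ β₁ β₂ | h < p.2 - p.1 ∧ p.2 ≤ M₁ + s}.ncard : ℝ))
      =ᶠ[𝓝[>] (0:ℝ)]
      (fun h => Real.Gamma (1 - α) * h ^ α * ({p ∈ β₁ | h < p.2 - p.1 ∧ p.2 ≤ M₁}.ncard : ℝ)
        + Real.Gamma (1 - α) * h ^ α * ({p ∈ β₂ | h < p.2 - p.1 ∧ p.2 ≤ s}.ncard : ℝ)) := by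
    filter_upwards [self_mem_nhdsWithin] with h hh
    exact key h hh
  have htend : Tendsto (fun h => Real.Gamma (1 - α) * h ^ α *
        ({p ∈ ipConcat M₁ β₁ β₂ | h < p.2 - p.1 ∧ p.2 ≤ M₁ + s}.ncard : ℝ))
      (𝓝[>] (0:ℝ)) (𝓝 (D₁ + D₂)) := Tendsto.congr' hev.symm (hD₁.add hD₂)
  unfold diversity
  rw [htend.limUnder_eq, hD₁.limUnder_eq, hD₂.limUnder_eq]

def corrSet (α Mβ Mγ : ℝ) (β γ : Set (ℝ × ℝ)) : Set ℝ :=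
  {d : ℝ | ∃ (n : ℕ) (U V : Fin n → ℝ × ℝ),
    (∀ j, U j ∈ β) ∧ (∀ j, V j ∈ γ) ∧ BlocksStrictMono U ∧ BlocksStrictMono V ∧
    d = distortion α Mβ Mγ β γ U V}

lemma dAlpha_eq (α Mβ Mγ : ℝ) (β γ : Set (ℝ × ℝ)) :
    dAlpha α Mβ Mγ β γ = sInf (corrSet α Mβ Mγ β γ) := rfl

lemma corrSet_nonempty (α Mβ Mγ : ℝ) (β γ : Set (ℝ × ℝ)) :
    (corrSet α Mβ Mγ β γ).Nonempty :=
  ⟨_, 0, (fun j => j.elim0), (fun j => j.elim0), (fun j => j.elim0), (fun j => j.elim0),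
    (fun i => i.elim0), (fun i => i.elim0), rfl⟩

lemma corrSet_mem_nonneg {α Mβ Mγ : ℝ} {β γ : Set (ℝ × ℝ)} {d : ℝ}
    (hd : d ∈ corrSet α Mβ Mγ β γ) : 0 ≤ d := by
  obtain ⟨n, U, V, _, _, _, _, rfl⟩ := hd
  exact le_trans (abs_nonneg _) (le_trans (le_max_right _ _) (le_max_right _ _))

lemma corrSet_bddBelow (α Mβ Mγ : ℝ) (β γ : Set (ℝ × ℝ)) :
    BddBelow (corrSet α Mβ Mγ β γ) :=
  ⟨0, fun _ hd => corrSet_mem_nonneg hd⟩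

lemma dAlpha_nonneg (α Mβ Mγ : ℝ) (β γ : Set (ℝ × ℝ)) : 0 ≤ dAlpha α Mβ Mγ β γ := by
  rw [dAlpha_eq]
  exact le_csInf (corrSet_nonempty _ _ _ _ _) (fun d hd => corrSet_mem_nonneg hd)

/-- Term (iv) is a lower bound for any element of the correspondence set. -/
lemma corrSet_mem_div {α Mβ Mγ : ℝ} {β γ : Set (ℝ × ℝ)} {d : ℝ}
    (hd : d ∈ corrSet α Mβ Mγ β γ) : |diversity α β Mβ - diversity α γ Mγ| ≤ d := by
  obtain ⟨n, U, V, _, _, _, _, rfl⟩ := hd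
  exact le_trans (le_max_right _ _) (le_max_right _ _)

/-- The mass difference is a lower bound for any element of the correspondence set. -/
lemma corrSet_mem_mass {α Mβ Mγ : ℝ} {β γ : Set (ℝ × ℝ)} {d : ℝ}
    (hβ : IsIntervalPartition Mβ β) (hγ : IsIntervalPartition Mγ γ)
    (hd : d ∈ corrSet α Mβ Mγ β γ) : |Mβ - Mγ| ≤ d := by
  obtain ⟨n, U, V, hU, hV, hUm, hVm, rfl⟩ := hd
  have hsU : ∑ j, ((U j).2 - (U j).1) ≤ Mβ := by
    have := sumLen_le U hβ.1 (fun j => hβ.2.1 _ (hU j)) hUm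
    linarith
  have hsV : ∑ j, ((V j).2 - (V j).1) ≤ Mγ := by
    have := sumLen_le V hγ.1 (fun j => hγ.2.1 _ (hV j)) hVm
    linarith
  have habs1 : ∑ j, (((U j).2 - (U j).1) - ((V j).2 - (V j).1))
      ≤ ∑ j, |((U j).2 - (U j).1) - ((V j).2 - (V j).1)| :=
    Finset.sum_le_sum (fun j _ => le_abs_self _)
  have habs2 : ∑ j, (((V j).2 - (V j).1) - ((U j).2 - (U j).1))
      ≤ ∑ j, |((U j).2 - (U j).1) - ((V j).2 - (V j).1)| :=
    Finset.sum_le_sum (fun j _ => (le_abs_self _).trans_eq (abs_sub_comm _ _))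
  rw [Finset.sum_sub_distrib] at habs1 habs2
  rw [abs_sub_le_iff]
  constructor
  · refine le_trans ?_ (le_trans (le_max_left _ _) (le_max_left _ _))
    linarith
  · refine le_trans ?_ (le_trans (le_max_right _ _) (le_max_left _ _))
    linarith

/-- The abstract mass-restriction inequality. -/
lemma mass_aux {n : ℕ} (u f : Fin n → ℝ) (s : Finset (Fin n)) {K M C : ℝ}
    (h : ∑ j ∈ sᶜ, (f j - u j) ≤ K) :
    (∑ j ∈ s, u j) + C - ∑ j ∈ s, f j
      ≤ ((∑ j : Fin n, u j) + (M + C) - ∑ j : Fin n, f j) + (K - M) := by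
  have h1 := Finset.sum_add_sum_compl s u
  have h2 := Finset.sum_add_sum_compl s f
  have h3 : ∑ j ∈ sᶜ, (f j - u j) = ∑ j ∈ sᶜ, f j - ∑ j ∈ sᶜ, u j :=
    Finset.sum_sub_distrib _ _
  linarith

lemma append_blocks_mono {n₁ n₂ : ℕ} {M₁ : ℝ} (U₁ : Fin n₁ → ℝ × ℝ) (U₂ : Fin n₂ → ℝ × ℝ)
    (h₁ : BlocksStrictMono U₁) (h₂ : BlocksStrictMono U₂)
    (hub : ∀ i, (U₁ i).2 ≤ M₁) (hlb : ∀ j, 0 ≤ (U₂ j).1) :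
    BlocksStrictMono (Fin.append U₁ (fun j => ((U₂ j).1 + M₁, (U₂ j).2 + M₁))) := by
  intro i j hij
  cases i using Fin.addCases with
  | left i =>
    cases j using Fin.addCases with
    | left j =>
      rw [Fin.append_left, Fin.append_left]
      refine h₁ i j ?_
      rw [Fin.lt_def] at hij ⊢
      simpa only [Fin.coe_castAdd] using hij
    | right j =>
      rw [Fin.append_left, Fin.append_right]
      have := hub i
      have := hlb j
      simp only
      linarith
  | right i =>
    cases j using Fin.addCases with
    | left j =>
      exfalso
      simp only [Fin.lt_def, Fin.coe_natAdd, Fin.coe_castAdd] at hij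
      omega
    | right j =>
      rw [Fin.append_right, Fin.append_right]
      have := h₂ i j (by
        rw [Fin.lt_def] at hij ⊢
        simp only [Fin.coe_natAdd] at hij
        omega)
      simp only
      linarith

/-- Upper bound: distortion of the concatenated correspondence. -/
lemma dAlpha_concat_le {α : ℝ} {M₁ M₂ N₁ N₂ : ℝ} {β₁ β₂ γ₁ γ₂ : Set (ℝ × ℝ)}
    (hβ₁ : IsIntervalPartition M₁ β₁) (hβ₂ : IsIntervalPartition M₂ β₂)
    (hγ₁ : IsIntervalPartition N₁ γ₁) (hγ₂ : IsIntervalPartition N₂ γ₂)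
    (hdβ₁ : HasDiversity α M₁ β₁) (hdβ₂ : HasDiversity α M₂ β₂)
    (hdγ₁ : HasDiversity α N₁ γ₁) (hdγ₂ : HasDiversity α N₂ γ₂) :
    dAlpha α (M₁ + M₂) (N₁ + N₂) (ipConcat M₁ β₁ β₂) (ipConcat N₁ γ₁ γ₂) ≤
      dAlpha α M₁ N₁ β₁ γ₁ + dAlpha α M₂ N₂ β₂ γ₂ := by
  have key : ∀ y ∈ corrSet α M₁ N₁ β₁ γ₁, ∀ z ∈ corrSet α M₂ N₂ β₂ γ₂,
      dAlpha α (M₁ + M₂) (N₁ + N₂) (ipConcat M₁ β₁ β₂) (ipConcat N₁ γ₁ γ₂) ≤ y + z := by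
    rintro y ⟨n₁, U₁, V₁, hU₁, hV₁, hU₁m, hV₁m, rfl⟩ z ⟨n₂, U₂, V₂, hU₂, hV₂, hU₂m, hV₂m, rfl⟩
    set y := distortion α M₁ N₁ β₁ γ₁ U₁ V₁ with hy
    set z := distortion α M₂ N₂ β₂ γ₂ U₂ V₂ with hz
    set W : Fin (n₁ + n₂) → ℝ × ℝ :=
      Fin.append U₁ (fun j => ((U₂ j).1 + M₁, (U₂ j).2 + M₁)) with hW
    set X : Fin (n₁ + n₂) → ℝ × ℝ :=
      Fin.append V₁ (fun j => ((V₂ j).1 + N₁, (V₂ j).2 + N₁)) with hX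
    have hWmem : ∀ i, W i ∈ ipConcat M₁ β₁ β₂ := by
      intro i
      cases i using Fin.addCases with
      | left i => rw [hW, Fin.append_left]; exact Or.inl (hU₁ i)
      | right i => rw [hW, Fin.append_right]; exact Or.inr ⟨U₂ i, hU₂ i, rfl⟩
    have hXmem : ∀ i, X i ∈ ipConcat N₁ γ₁ γ₂ := by
      intro i
      cases i using Fin.addCases with
      | left i => rw [hX, Fin.append_left]; exact Or.inl (hV₁ i)
      | right i => rw [hX, Fin.append_right]; exact Or.inr ⟨V₂ i, hV₂ i, rfl⟩
    have hWm : BlocksStrictMono W :=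
      append_blocks_mono U₁ U₂ hU₁m hU₂m (fun i => (hβ₁.2.1 _ (hU₁ i)).2.2)
        (fun j => (hβ₂.2.1 _ (hU₂ j)).1)
    have hXm : BlocksStrictMono X :=
      append_blocks_mono V₁ V₂ hV₁m hV₂m (fun i => (hγ₁.2.1 _ (hV₁ i)).2.2)
        (fun j => (hγ₂.2.1 _ (hV₂ j)).1)
    have hmem : distortion α (M₁ + M₂) (N₁ + N₂) (ipConcat M₁ β₁ β₂) (ipConcat N₁ γ₁ γ₂) W X
        ∈ corrSet α (M₁ + M₂) (N₁ + N₂) (ipConcat M₁ β₁ β₂) (ipConcat N₁ γ₁ γ₂) :=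
      ⟨n₁ + n₂, W, X, hWmem, hXmem, hWm, hXm, rfl⟩
    refine le_trans (csInf_le (corrSet_bddBelow _ _ _ _ _) hmem) ?_
    -- now bound the distortion of the appended correspondence
    have hy0 : 0 ≤ y := corrSet_mem_nonneg ⟨n₁, U₁, V₁, hU₁, hV₁, hU₁m, hV₁m, hy⟩
    have hz0 : 0 ≤ z := corrSet_mem_nonneg ⟨n₂, U₂, V₂, hU₂, hV₂, hU₂m, hV₂m, hz⟩
    have hsum_abs : ∑ i : Fin (n₁ + n₂), |((W i).2 - (W i).1) - ((X i).2 - (X i).1)|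
        = (∑ j, |((U₁ j).2 - (U₁ j).1) - ((V₁ j).2 - (V₁ j).1)|)
          + ∑ j, |((U₂ j).2 - (U₂ j).1) - ((V₂ j).2 - (V₂ j).1)| := by
      rw [Fin.sum_univ_add]
      congr 1
      · exact Finset.sum_congr rfl (fun j _ => by rw [hW, hX, Fin.append_left, Fin.append_left])
      · refine Finset.sum_congr rfl (fun j _ => ?_)
        rw [hW, hX, Fin.append_right, Fin.append_right]
        congr 1
        simp only
        ring
    have hsum_W : ∑ i : Fin (n₁ + n₂), ((W i).2 - (W i).1)
        = (∑ j, ((U₁ j).2 - (U₁ j).1)) + ∑ j, ((U₂ j).2 - (U₂ j).1) := by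
      rw [Fin.sum_univ_add]
      congr 1
      · exact Finset.sum_congr rfl (fun j _ => by rw [hW, Fin.append_left])
      · refine Finset.sum_congr rfl (fun j _ => ?_)
        rw [hW, Fin.append_right]
        simp only
        ring
    have hsum_X : ∑ i : Fin (n₁ + n₂), ((X i).2 - (X i).1)
        = (∑ j, ((V₁ j).2 - (V₁ j).1)) + ∑ j, ((V₂ j).2 - (V₂ j).1) := by
      rw [Fin.sum_univ_add]
      congr 1
      · exact Finset.sum_congr rfl (fun j _ => by rw [hX, Fin.append_left])
      · refine Finset.sum_congr rfl (fun j _ => ?_)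
        rw [hX, Fin.append_right]
        simp only
        ring
    have hy_i : (∑ j, |((U₁ j).2 - (U₁ j).1) - ((V₁ j).2 - (V₁ j).1)|) + M₁
        - ∑ j, ((U₁ j).2 - (U₁ j).1) ≤ y :=
      le_trans (le_max_left _ _) (le_max_left _ _)
    have hy_ii : (∑ j, |((U₁ j).2 - (U₁ j).1) - ((V₁ j).2 - (V₁ j).1)|) + N₁
        - ∑ j, ((V₁ j).2 - (V₁ j).1) ≤ y :=
      le_trans (le_max_right _ _) (le_max_left _ _)
    have hz_i : (∑ j, |((U₂ j).2 - (U₂ j).1) - ((V₂ j).2 - (V₂ j).1)|) + M₂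
        - ∑ j, ((U₂ j).2 - (U₂ j).1) ≤ z :=
      le_trans (le_max_left _ _) (le_max_left _ _)
    have hz_ii : (∑ j, |((U₂ j).2 - (U₂ j).1) - ((V₂ j).2 - (V₂ j).1)|) + N₂
        - ∑ j, ((V₂ j).2 - (V₂ j).1) ≤ z :=
      le_trans (le_max_right _ _) (le_max_left _ _)
    have hy_iv : |diversity α β₁ M₁ - diversity α γ₁ N₁| ≤ y :=
      le_trans (le_max_right _ _) (le_max_right _ _)
    have hz_iv : |diversity α β₂ M₂ - diversity α γ₂ N₂| ≤ z :=
      le_trans (le_max_right _ _) (le_max_right _ _)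
    have hcR : ∀ s ∈ Set.Icc (0:ℝ) M₂, diversity α (ipConcat M₁ β₁ β₂) (M₁ + s)
        = diversity α β₁ M₁ + diversity α β₂ s :=
      fun s hs => diversity_concat_right hβ₁ hβ₂ hdβ₁ hdβ₂ hs
    have hcR' : ∀ s ∈ Set.Icc (0:ℝ) N₂, diversity α (ipConcat N₁ γ₁ γ₂) (N₁ + s)
        = diversity α γ₁ N₁ + diversity α γ₂ s :=
      fun s hs => diversity_concat_right hγ₁ hγ₂ hdγ₁ hdγ₂ hs
    refine max_le (max_le ?_ ?_) (max_le ?_ ?_)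
    · rw [hsum_abs, hsum_W]; linarith
    · rw [hsum_abs, hsum_X]; linarith
    · refine Real.iSup_le ?_ (by linarith)
      intro i
      cases i using Fin.addCases with
      | left i =>
        rw [hW, hX, Fin.append_left, Fin.append_left,
          diversity_concat_left hβ₂ (le_of_lt (lt_of_lt_of_le (hβ₁.2.1 _ (hU₁ i)).2.1
            (hβ₁.2.1 _ (hU₁ i)).2.2)),
          diversity_concat_left hγ₂ (le_of_lt (lt_of_lt_of_le (hγ₁.2.1 _ (hV₁ i)).2.1
            (hγ₁.2.1 _ (hV₁ i)).2.2))]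
        have h1 : |diversity α β₁ (U₁ i).1 - diversity α γ₁ (V₁ i).1| ≤ y := by
          refine le_trans (le_ciSup (f := fun j : Fin n₁ =>
            |diversity α β₁ (U₁ j).1 - diversity α γ₁ (V₁ j).1|)
            (Set.Finite.bddAbove (Set.finite_range _)) i) ?_
          exact le_trans (le_max_left _ _) (le_max_right _ _)
        linarith
      | right i =>
        rw [hW, hX, Fin.append_right, Fin.append_right]
        simp only
        have hb := hβ₂.2.1 _ (hU₂ i)
        have hb' := hγ₂.2.1 _ (hV₂ i)
        rw [show (U₂ i).1 + M₁ = M₁ + (U₂ i).1 by ring,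
          show (V₂ i).1 + N₁ = N₁ + (V₂ i).1 by ring,
          hcR _ ⟨hb.1, le_of_lt (lt_of_lt_of_le hb.2.1 hb.2.2)⟩,
          hcR' _ ⟨hb'.1, le_of_lt (lt_of_lt_of_le hb'.2.1 hb'.2.2)⟩]
        rw [show diversity α β₁ M₁ + diversity α β₂ (U₂ i).1
            - (diversity α γ₁ N₁ + diversity α γ₂ (V₂ i).1)
            = (diversity α β₁ M₁ - diversity α γ₁ N₁)
              + (diversity α β₂ (U₂ i).1 - diversity α γ₂ (V₂ i).1) by ring]
        refine le_trans (abs_add_le _ _) ?_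
        have h2 : |diversity α β₂ (U₂ i).1 - diversity α γ₂ (V₂ i).1| ≤ z := by
          refine le_trans (le_ciSup (f := fun j : Fin n₂ =>
            |diversity α β₂ (U₂ j).1 - diversity α γ₂ (V₂ j).1|)
            (Set.Finite.bddAbove (Set.finite_range _)) i) ?_
          exact le_trans (le_max_left _ _) (le_max_right _ _)
        linarith
    · rw [hcR _ ⟨hβ₂.1, le_refl _⟩, hcR' _ ⟨hγ₂.1, le_refl _⟩]
      rw [show diversity α β₁ M₁ + diversity α β₂ M₂
          - (diversity α γ₁ N₁ + diversity α γ₂ N₂)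
          = (diversity α β₁ M₁ - diversity α γ₁ N₁)
            + (diversity α β₂ M₂ - diversity α γ₂ N₂) by ring]
      refine le_trans (abs_add_le _ _) ?_
      linarith
  -- now pass to infima
  have h1 : ∀ z ∈ corrSet α M₂ N₂ β₂ γ₂,
      dAlpha α (M₁ + M₂) (N₁ + N₂) (ipConcat M₁ β₁ β₂) (ipConcat N₁ γ₁ γ₂) - z
        ≤ dAlpha α M₁ N₁ β₁ γ₁ := by
    intro z hz
    rw [dAlpha_eq α M₁ N₁]
    refine le_csInf (corrSet_nonempty _ _ _ _ _) (fun y hy => ?_)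
    have := key y hy z hz
    linarith
  rw [dAlpha_eq α M₂ N₂]
  have h2 : dAlpha α (M₁ + M₂) (N₁ + N₂) (ipConcat M₁ β₁ β₂) (ipConcat N₁ γ₁ γ₂)
      - dAlpha α M₁ N₁ β₁ γ₁ ≤ sInf (corrSet α M₂ N₂ β₂ γ₂) := by
    refine le_csInf (corrSet_nonempty _ _ _ _ _) (fun z hz => ?_)
    have := h1 z hz
    linarith
  linarith

lemma dAlpha_first_le {α : ℝ} {M₁ M₂ N₁ N₂ : ℝ} {β₁ β₂ γ₁ γ₂ : Set (ℝ × ℝ)}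
    (hβ₁ : IsIntervalPartition M₁ β₁) (hβ₂ : IsIntervalPartition M₂ β₂)
    (hγ₁ : IsIntervalPartition N₁ γ₁) (hγ₂ : IsIntervalPartition N₂ γ₂)
    (hdβ₁ : HasDiversity α M₁ β₁) (hdβ₂ : HasDiversity α M₂ β₂)
    (hdγ₁ : HasDiversity α N₁ γ₁) (hdγ₂ : HasDiversity α N₂ γ₂) :
    ∀ x ∈ corrSet α (M₁ + M₂) (N₁ + N₂) (ipConcat M₁ β₁ β₂) (ipConcat N₁ γ₁ γ₂),
    ∀ z ∈ corrSet α M₂ N₂ β₂ γ₂, dAlpha α M₁ N₁ β₁ γ₁ ≤ x + z := by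
  rintro x ⟨n, W, X, hW, hX, hWm, hXm, rfl⟩ z hz
  set x := distortion α (M₁ + M₂) (N₁ + N₂) (ipConcat M₁ β₁ β₂) (ipConcat N₁ γ₁ γ₂) W X
    with hxdef
  have hx0 : 0 ≤ x := corrSet_mem_nonneg ⟨n, W, X, hW, hX, hWm, hXm, hxdef⟩
  have hz0 : 0 ≤ z := corrSet_mem_nonneg hz
  have hz_iv : |diversity α β₂ M₂ - diversity α γ₂ N₂| ≤ z := corrSet_mem_div hz
  have hz_mass : |M₂ - N₂| ≤ z := corrSet_mem_mass hβ₂ hγ₂ hz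
  have hWblk : ∀ j, 0 ≤ (W j).1 ∧ (W j).1 < (W j).2 ∧ (W j).2 ≤ M₁ + M₂ :=
    fun j => concat_block hβ₁ hβ₂ (hW j)
  have hXblk : ∀ j, 0 ≤ (X j).1 ∧ (X j).1 < (X j).2 ∧ (X j).2 ≤ N₁ + N₂ :=
    fun j => concat_block hγ₁ hγ₂ (hX j)
  classical
  set s : Finset (Fin n) := Finset.univ.filter (fun j => (W j).2 ≤ M₁ ∧ (X j).2 ≤ N₁)
    with hsdef
  have hmem_s : ∀ j, j ∈ s ↔ ((W j).2 ≤ M₁ ∧ (X j).2 ≤ N₁) := by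
    intro j; simp [hsdef]
  set e : Fin s.card ≃o {x // x ∈ s} := s.orderIsoOfFin rfl with hedef
  set U' : Fin s.card → ℝ × ℝ := fun k => W (e k) with hU'
  set V' : Fin s.card → ℝ × ℝ := fun k => X (e k) with hV'
  have hks : ∀ k : Fin s.card, ((e k : Fin n) ∈ s) := fun k => (e k).2
  have hU'mem : ∀ k, U' k ∈ β₁ := by
    intro k
    have h1 := ((hmem_s _).1 (hks k)).1
    rcases concat_cases hβ₁ hβ₂ (hW (e k)) with ⟨hm, _⟩ | ⟨q, hq, heq, hgt⟩
    · exact hm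
    · exfalso; linarith
  have hV'mem : ∀ k, V' k ∈ γ₁ := by
    intro k
    have h1 := ((hmem_s _).1 (hks k)).2
    rcases concat_cases hγ₁ hγ₂ (hX (e k)) with ⟨hm, _⟩ | ⟨q, hq, heq, hgt⟩
    · exact hm
    · exfalso; linarith
  have hU'm : BlocksStrictMono U' := by
    intro i j hij
    exact hWm _ _ (by exact_mod_cast e.strictMono hij)
  have hV'm : BlocksStrictMono V' := by
    intro i j hij
    exact hXm _ _ (by exact_mod_cast e.strictMono hij)
  have hmem : distortion α M₁ N₁ β₁ γ₁ U' V' ∈ corrSet α M₁ N₁ β₁ γ₁ :=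
    ⟨s.card, U', V', hU'mem, hV'mem, hU'm, hV'm, rfl⟩
  refine le_trans (csInf_le (corrSet_bddBelow _ _ _ _ _) hmem) ?_
  -- bound components of x
  have hx_i : (∑ j, |((W j).2 - (W j).1) - ((X j).2 - (X j).1)|) + (M₁ + M₂)
      - ∑ j, ((W j).2 - (W j).1) ≤ x :=
    le_trans (le_max_left _ _) (le_max_left _ _)
  have hx_ii : (∑ j, |((W j).2 - (W j).1) - ((X j).2 - (X j).1)|) + (N₁ + N₂)
      - ∑ j, ((X j).2 - (X j).1) ≤ x :=
    le_trans (le_max_right _ _) (le_max_left _ _)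
  have hx_iv : |diversity α (ipConcat M₁ β₁ β₂) (M₁ + M₂)
      - diversity α (ipConcat N₁ γ₁ γ₂) (N₁ + N₂)| ≤ x :=
    le_trans (le_max_right _ _) (le_max_right _ _)
  -- sums over the restricted correspondence
  have hsum_u : (∑ k, |((U' k).2 - (U' k).1) - ((V' k).2 - (V' k).1)|)
      = ∑ j ∈ s, |((W j).2 - (W j).1) - ((X j).2 - (X j).1)| := by
    rw [hU', hV']
    exact sum_finset_orderIso s (fun j => |((W j).2 - (W j).1) - ((X j).2 - (X j).1)|)
  have hsum_f : (∑ k, ((U' k).2 - (U' k).1)) = ∑ j ∈ s, ((W j).2 - (W j).1) := by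
    rw [hU']
    exact sum_finset_orderIso s (fun j => ((W j).2 - (W j).1))
  have hsum_g : (∑ k, ((V' k).2 - (V' k).1)) = ∑ j ∈ s, ((X j).2 - (X j).1) := by
    rw [hV']
    exact sum_finset_orderIso s (fun j => ((X j).2 - (X j).1))
  -- dichotomy
  have hdich : (∀ j ∈ sᶜ, M₁ < (W j).2) ∨ (∀ j ∈ sᶜ, N₁ < (X j).2) := by
    by_cases hex : ∃ j, (W j).2 ≤ M₁ ∧ N₁ < (X j).2
    · right
      intro j hj
      by_contra hc
      push_neg at hc
      have hj2 : ¬((W j).2 ≤ M₁ ∧ (X j).2 ≤ N₁) := by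
        have := Finset.mem_compl.1 hj
        rw [hmem_s] at this
        exact this
      have hWgt : M₁ < (W j).2 := by
        by_contra hc2
        push_neg at hc2
        exact hj2 ⟨hc2, hc⟩
      obtain ⟨j₀, hj₀1, hj₀2⟩ := hex
      exact cross_excl W X (fun i => (hWblk i).2.1) (fun i => (hXblk i).2.1) hWm hXm
        j₀ j hj₀1 hj₀2 hWgt hc
    · left
      intro j hj
      by_contra hc
      push_neg at hc
      have hj2 : ¬((W j).2 ≤ M₁ ∧ (X j).2 ≤ N₁) := by
        have := Finset.mem_compl.1 hj
        rw [hmem_s] at this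
        exact this
      have hXgt : N₁ < (X j).2 := by
        by_contra hc2
        push_neg at hc2
        exact hj2 ⟨hc, hc2⟩
      exact hex ⟨j, hc, hXgt⟩
  -- mass bounds in either branch
  have habs1 : N₂ - M₂ ≤ |M₂ - N₂| := by
    rw [abs_sub_comm]; exact le_abs_self _
  have habs2 : M₂ - N₂ ≤ |M₂ - N₂| := le_abs_self _
  have hmass_i : (∑ j ∈ s, |((W j).2 - (W j).1) - ((X j).2 - (X j).1)|) + M₁
        - (∑ j ∈ s, ((W j).2 - (W j).1)) ≤ x + z ∧
      (∑ j ∈ s, |((W j).2 - (W j).1) - ((X j).2 - (X j).1)|) + N₁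
        - (∑ j ∈ s, ((X j).2 - (X j).1)) ≤ x + z := by
    rcases hdich with hbr | hbr
    · -- sᶜ ⊆ W-type-2 : Σ_{sᶜ} f ≤ M₂
      have hblk2 : ∀ j ∈ sᶜ, M₁ ≤ (W j).1 ∧ (W j).1 < (W j).2 ∧ (W j).2 ≤ M₁ + M₂ := by
        intro j hj
        rcases concat_cases hβ₁ hβ₂ (hW j) with ⟨_, hle⟩ | ⟨q, hq, heq, _⟩
        · exact absurd hle (not_le.2 (hbr j hj))
        · have hb := hβ₂.2.1 q hq
          rw [heq]
          exact ⟨by simpa using (by linarith [hb.1] : M₁ ≤ q.1 + M₁),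
            by simpa using hb.2.1, by simpa using (by linarith [hb.2.2] : q.2 + M₁ ≤ M₁ + M₂)⟩
      have hsumf : ∑ j ∈ sᶜ, ((W j).2 - (W j).1) ≤ M₂ := by
        have := sumLen_finset_le W sᶜ (by linarith [hβ₂.1] : M₁ ≤ M₁ + M₂) hWm hblk2
        linarith
      have hKi : ∑ j ∈ sᶜ, (((W j).2 - (W j).1)
          - |((W j).2 - (W j).1) - ((X j).2 - (X j).1)|) ≤ M₂ := by
        refine le_trans (Finset.sum_le_sum (fun j _ => ?_)) hsumf
        have := abs_nonneg (((W j).2 - (W j).1) - ((X j).2 - (X j).1))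
        linarith
      have hKii : ∑ j ∈ sᶜ, (((X j).2 - (X j).1)
          - |((W j).2 - (W j).1) - ((X j).2 - (X j).1)|) ≤ M₂ := by
        refine le_trans (Finset.sum_le_sum (fun j _ => ?_)) hsumf
        have := (le_abs_self (((X j).2 - (X j).1) - ((W j).2 - (W j).1))).trans_eq
          (abs_sub_comm _ _)
        linarith
      have h1 := mass_aux (fun j => |((W j).2 - (W j).1) - ((X j).2 - (X j).1)|)
        (fun j => ((W j).2 - (W j).1)) s (K := M₂) (M := M₂) (C := M₁) hKi
      have h2 := mass_aux (fun j => |((W j).2 - (W j).1) - ((X j).2 - (X j).1)|)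
        (fun j => ((X j).2 - (X j).1)) s (K := M₂) (M := N₂) (C := N₁) hKii
      constructor <;> [skip; skip] <;> [linarith; linarith]
    · -- sᶜ ⊆ X-type-2 : Σ_{sᶜ} g ≤ N₂
      have hblk2 : ∀ j ∈ sᶜ, N₁ ≤ (X j).1 ∧ (X j).1 < (X j).2 ∧ (X j).2 ≤ N₁ + N₂ := by
        intro j hj
        rcases concat_cases hγ₁ hγ₂ (hX j) with ⟨_, hle⟩ | ⟨q, hq, heq, _⟩
        · exact absurd hle (not_le.2 (hbr j hj))
        · have hb := hγ₂.2.1 q hq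
          rw [heq]
          exact ⟨by simpa using (by linarith [hb.1] : N₁ ≤ q.1 + N₁),
            by simpa using hb.2.1, by simpa using (by linarith [hb.2.2] : q.2 + N₁ ≤ N₁ + N₂)⟩
      have hsumg : ∑ j ∈ sᶜ, ((X j).2 - (X j).1) ≤ N₂ := by
        have := sumLen_finset_le X sᶜ (by linarith [hγ₂.1] : N₁ ≤ N₁ + N₂) hXm hblk2
        linarith
      have hKi : ∑ j ∈ sᶜ, (((W j).2 - (W j).1)
          - |((W j).2 - (W j).1) - ((X j).2 - (X j).1)|) ≤ N₂ := by
        refine le_trans (Finset.sum_le_sum (fun j _ => ?_)) hsumg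
        have := le_abs_self (((W j).2 - (W j).1) - ((X j).2 - (X j).1))
        linarith
      have hKii : ∑ j ∈ sᶜ, (((X j).2 - (X j).1)
          - |((W j).2 - (W j).1) - ((X j).2 - (X j).1)|) ≤ N₂ := by
        refine le_trans (Finset.sum_le_sum (fun j _ => ?_)) hsumg
        have := abs_nonneg (((W j).2 - (W j).1) - ((X j).2 - (X j).1))
        linarith
      have h1 := mass_aux (fun j => |((W j).2 - (W j).1) - ((X j).2 - (X j).1)|)
        (fun j => ((W j).2 - (W j).1)) s (K := N₂) (M := M₂) (C := M₁) hKi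
      have h2 := mass_aux (fun j => |((W j).2 - (W j).1) - ((X j).2 - (X j).1)|)
        (fun j => ((X j).2 - (X j).1)) s (K := N₂) (M := N₂) (C := N₁) hKii
      constructor <;> [skip; skip] <;> [linarith; linarith]
  refine max_le (max_le ?_ ?_) (max_le ?_ ?_)
  · rw [hsum_u, hsum_f]; exact hmass_i.1
  · rw [hsum_u, hsum_g]; exact hmass_i.2
  · refine Real.iSup_le ?_ (by linarith)
    intro k
    have h1 := ((hmem_s _).1 (hks k)).1
    have h2 := ((hmem_s _).1 (hks k)).2
    have hu1 : (U' k).1 ≤ M₁ := by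
      rw [hU']
      have := hWblk (e k)
      simp only
      linarith
    have hv1 : (V' k).1 ≤ N₁ := by
      rw [hV']
      have := hXblk (e k)
      simp only
      linarith
    rw [← diversity_concat_left hβ₂ hu1, ← diversity_concat_left hγ₂ hv1]
    have hle : |diversity α (ipConcat M₁ β₁ β₂) (U' k).1
        - diversity α (ipConcat N₁ γ₁ γ₂) (V' k).1|
        ≤ ⨆ j : Fin n, |diversity α (ipConcat M₁ β₁ β₂) (W j).1
          - diversity α (ipConcat N₁ γ₁ γ₂) (X j).1| := by
      rw [hU', hV']
      exact le_ciSup (f := fun j : Fin n => |diversity α (ipConcat M₁ β₁ β₂) (W j).1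
        - diversity α (ipConcat N₁ γ₁ γ₂) (X j).1|)
        (Set.Finite.bddAbove (Set.finite_range _)) (e k)
    have hx_sup : (⨆ j : Fin n, |diversity α (ipConcat M₁ β₁ β₂) (W j).1
        - diversity α (ipConcat N₁ γ₁ γ₂) (X j).1|) ≤ x :=
      le_trans (le_max_left _ _) (le_max_right _ _)
    linarith
  · have hA := diversity_concat_right hβ₁ hβ₂ hdβ₁ hdβ₂ (s := M₂) ⟨hβ₂.1, le_refl _⟩
    have hB := diversity_concat_right hγ₁ hγ₂ hdγ₁ hdγ₂ (s := N₂) ⟨hγ₂.1, le_refl _⟩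
    have heq : diversity α β₁ M₁ - diversity α γ₁ N₁
        = (diversity α (ipConcat M₁ β₁ β₂) (M₁ + M₂)
            - diversity α (ipConcat N₁ γ₁ γ₂) (N₁ + N₂))
          - (diversity α β₂ M₂ - diversity α γ₂ N₂) := by
      rw [hA, hB]; ring
    rw [heq]
    exact le_trans (abs_sub _ _) (add_le_add hx_iv hz_iv)

lemma dAlpha_second_le {α : ℝ} {M₁ M₂ N₁ N₂ : ℝ} {β₁ β₂ γ₁ γ₂ : Set (ℝ × ℝ)}
    (hβ₁ : IsIntervalPartition M₁ β₁) (hβ₂ : IsIntervalPartition M₂ β₂)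
    (hγ₁ : IsIntervalPartition N₁ γ₁) (hγ₂ : IsIntervalPartition N₂ γ₂)
    (hdβ₁ : HasDiversity α M₁ β₁) (hdβ₂ : HasDiversity α M₂ β₂)
    (hdγ₁ : HasDiversity α N₁ γ₁) (hdγ₂ : HasDiversity α N₂ γ₂) :
    ∀ x ∈ corrSet α (M₁ + M₂) (N₁ + N₂) (ipConcat M₁ β₁ β₂) (ipConcat N₁ γ₁ γ₂),
    ∀ y ∈ corrSet α M₁ N₁ β₁ γ₁, dAlpha α M₂ N₂ β₂ γ₂ ≤ x + y := by
  rintro x ⟨n, W, X, hW, hX, hWm, hXm, rfl⟩ y hy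
  set x := distortion α (M₁ + M₂) (N₁ + N₂) (ipConcat M₁ β₁ β₂) (ipConcat N₁ γ₁ γ₂) W X
    with hxdef
  have hx0 : 0 ≤ x := corrSet_mem_nonneg ⟨n, W, X, hW, hX, hWm, hXm, hxdef⟩
  have hy0 : 0 ≤ y := corrSet_mem_nonneg hy
  have hy_iv : |diversity α β₁ M₁ - diversity α γ₁ N₁| ≤ y := corrSet_mem_div hy
  have hy_mass : |M₁ - N₁| ≤ y := corrSet_mem_mass hβ₁ hγ₁ hy
  have hWblk : ∀ j, 0 ≤ (W j).1 ∧ (W j).1 < (W j).2 ∧ (W j).2 ≤ M₁ + M₂ :=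
    fun j => concat_block hβ₁ hβ₂ (hW j)
  have hXblk : ∀ j, 0 ≤ (X j).1 ∧ (X j).1 < (X j).2 ∧ (X j).2 ≤ N₁ + N₂ :=
    fun j => concat_block hγ₁ hγ₂ (hX j)
  classical
  set s : Finset (Fin n) := Finset.univ.filter (fun j => M₁ < (W j).2 ∧ N₁ < (X j).2)
    with hsdef
  have hmem_s : ∀ j, j ∈ s ↔ (M₁ < (W j).2 ∧ N₁ < (X j).2) := by
    intro j; simp [hsdef]
  set e : Fin s.card ≃o {x // x ∈ s} := s.orderIsoOfFin rfl with hedef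
  have hks : ∀ k : Fin s.card, ((e k : Fin n) ∈ s) := fun k => (e k).2
  set U' : Fin s.card → ℝ × ℝ := fun k => ((W (e k)).1 - M₁, (W (e k)).2 - M₁) with hU'
  set V' : Fin s.card → ℝ × ℝ := fun k => ((X (e k)).1 - N₁, (X (e k)).2 - N₁) with hV'
  have hWq : ∀ k : Fin s.card, ∃ q ∈ β₂, W (e k) = (q.1 + M₁, q.2 + M₁) := by
    intro k
    have h1 := ((hmem_s _).1 (hks k)).1
    rcases concat_cases hβ₁ hβ₂ (hW (e k)) with ⟨_, hle⟩ | ⟨q, hq, heq, _⟩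
    · exact absurd h1 (not_lt.2 hle)
    · exact ⟨q, hq, heq⟩
  have hXq : ∀ k : Fin s.card, ∃ q ∈ γ₂, X (e k) = (q.1 + N₁, q.2 + N₁) := by
    intro k
    have h1 := ((hmem_s _).1 (hks k)).2
    rcases concat_cases hγ₁ hγ₂ (hX (e k)) with ⟨_, hle⟩ | ⟨q, hq, heq, _⟩
    · exact absurd h1 (not_lt.2 hle)
    · exact ⟨q, hq, heq⟩
  have hU'mem : ∀ k, U' k ∈ β₂ := by
    intro k
    obtain ⟨q, hq, heq⟩ := hWq k
    have : U' k = q := by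
      rw [hU']
      simp only [heq]
      exact Prod.ext (by simp) (by simp)
    rw [this]; exact hq
  have hV'mem : ∀ k, V' k ∈ γ₂ := by
    intro k
    obtain ⟨q, hq, heq⟩ := hXq k
    have : V' k = q := by
      rw [hV']
      simp only [heq]
      exact Prod.ext (by simp) (by simp)
    rw [this]; exact hq
  have hU'm : BlocksStrictMono U' := by
    intro i j hij
    have := hWm _ _ (by exact_mod_cast e.strictMono hij : (e i : Fin n) < e j)
    rw [hU']
    simp only
    linarith
  have hV'm : BlocksStrictMono V' := by
    intro i j hij
    have := hXm _ _ (by exact_mod_cast e.strictMono hij : (e i : Fin n) < e j)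
    rw [hV']
    simp only
    linarith
  have hmem : distortion α M₂ N₂ β₂ γ₂ U' V' ∈ corrSet α M₂ N₂ β₂ γ₂ :=
    ⟨s.card, U', V', hU'mem, hV'mem, hU'm, hV'm, rfl⟩
  refine le_trans (csInf_le (corrSet_bddBelow _ _ _ _ _) hmem) ?_
  have hx_i : (∑ j, |((W j).2 - (W j).1) - ((X j).2 - (X j).1)|) + (M₁ + M₂)
      - ∑ j, ((W j).2 - (W j).1) ≤ x :=
    le_trans (le_max_left _ _) (le_max_left _ _)
  have hx_ii : (∑ j, |((W j).2 - (W j).1) - ((X j).2 - (X j).1)|) + (N₁ + N₂)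
      - ∑ j, ((X j).2 - (X j).1) ≤ x :=
    le_trans (le_max_right _ _) (le_max_left _ _)
  have hx_iv : |diversity α (ipConcat M₁ β₁ β₂) (M₁ + M₂)
      - diversity α (ipConcat N₁ γ₁ γ₂) (N₁ + N₂)| ≤ x :=
    le_trans (le_max_right _ _) (le_max_right _ _)
  have hsum_u : (∑ k, |((U' k).2 - (U' k).1) - ((V' k).2 - (V' k).1)|)
      = ∑ j ∈ s, |((W j).2 - (W j).1) - ((X j).2 - (X j).1)| := by
    rw [hU', hV',
      ← sum_finset_orderIso s (fun j => |((W j).2 - (W j).1) - ((X j).2 - (X j).1)|)]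
    exact Finset.sum_congr rfl (fun k _ => by simp only; congr 1; ring)
  have hsum_f : (∑ k, ((U' k).2 - (U' k).1)) = ∑ j ∈ s, ((W j).2 - (W j).1) := by
    rw [hU', ← sum_finset_orderIso s (fun j => ((W j).2 - (W j).1))]
    exact Finset.sum_congr rfl (fun k _ => by simp only; ring)
  have hsum_g : (∑ k, ((V' k).2 - (V' k).1)) = ∑ j ∈ s, ((X j).2 - (X j).1) := by
    rw [hV', ← sum_finset_orderIso s (fun j => ((X j).2 - (X j).1))]
    exact Finset.sum_congr rfl (fun k _ => by simp only; ring)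
  -- dichotomy
  have hdich : (∀ j ∈ sᶜ, (W j).2 ≤ M₁) ∨ (∀ j ∈ sᶜ, (X j).2 ≤ N₁) := by
    by_cases hex : ∃ j, M₁ < (W j).2 ∧ (X j).2 ≤ N₁
    · right
      intro j hj
      by_contra hc
      push_neg at hc
      have hj2 : ¬(M₁ < (W j).2 ∧ N₁ < (X j).2) := by
        have := Finset.mem_compl.1 hj
        rw [hmem_s] at this
        exact this
      have hWle : (W j).2 ≤ M₁ := by
        by_contra hc2
        push_neg at hc2
        exact hj2 ⟨hc2, hc⟩
      obtain ⟨j₀, hj₀1, hj₀2⟩ := hex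
      exact cross_excl W X (fun i => (hWblk i).2.1) (fun i => (hXblk i).2.1) hWm hXm
        j j₀ hWle hc hj₀1 hj₀2
    · left
      intro j hj
      by_contra hc
      push_neg at hc
      have hj2 : ¬(M₁ < (W j).2 ∧ N₁ < (X j).2) := by
        have := Finset.mem_compl.1 hj
        rw [hmem_s] at this
        exact this
      have hXle : (X j).2 ≤ N₁ := by
        by_contra hc2
        push_neg at hc2
        exact hj2 ⟨hc, hc2⟩
      exact hex ⟨j, hc, hXle⟩
  have habs1 : N₁ - M₁ ≤ |M₁ - N₁| := by
    rw [abs_sub_comm]; exact le_abs_self _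
  have habs2 : M₁ - N₁ ≤ |M₁ - N₁| := le_abs_self _
  have hmass_i : (∑ j ∈ s, |((W j).2 - (W j).1) - ((X j).2 - (X j).1)|) + M₂
        - (∑ j ∈ s, ((W j).2 - (W j).1)) ≤ x + y ∧
      (∑ j ∈ s, |((W j).2 - (W j).1) - ((X j).2 - (X j).1)|) + N₂
        - (∑ j ∈ s, ((X j).2 - (X j).1)) ≤ x + y := by
    rcases hdich with hbr | hbr
    · -- sᶜ ⊆ W-type-1 : Σ_{sᶜ} f ≤ M₁
      have hblk2 : ∀ j ∈ sᶜ, (0:ℝ) ≤ (W j).1 ∧ (W j).1 < (W j).2 ∧ (W j).2 ≤ M₁ := by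
        intro j hj
        rcases concat_cases hβ₁ hβ₂ (hW j) with ⟨hm, hle⟩ | ⟨q, hq, heq, hgt⟩
        · exact hβ₁.2.1 _ hm
        · exact absurd (hbr j hj) (not_le.2 hgt)
      have hsumf : ∑ j ∈ sᶜ, ((W j).2 - (W j).1) ≤ M₁ := by
        have := sumLen_finset_le W sᶜ hβ₁.1 hWm hblk2
        linarith
      have hKi : ∑ j ∈ sᶜ, (((W j).2 - (W j).1)
          - |((W j).2 - (W j).1) - ((X j).2 - (X j).1)|) ≤ M₁ := by
        refine le_trans (Finset.sum_le_sum (fun j _ => ?_)) hsumf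
        have := abs_nonneg (((W j).2 - (W j).1) - ((X j).2 - (X j).1))
        linarith
      have hKii : ∑ j ∈ sᶜ, (((X j).2 - (X j).1)
          - |((W j).2 - (W j).1) - ((X j).2 - (X j).1)|) ≤ M₁ := by
        refine le_trans (Finset.sum_le_sum (fun j _ => ?_)) hsumf
        have := (le_abs_self (((X j).2 - (X j).1) - ((W j).2 - (W j).1))).trans_eq
          (abs_sub_comm _ _)
        linarith
      have h1 := mass_aux (fun j => |((W j).2 - (W j).1) - ((X j).2 - (X j).1)|)
        (fun j => ((W j).2 - (W j).1)) s (K := M₁) (M := M₁) (C := M₂) hKi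
      have h2 := mass_aux (fun j => |((W j).2 - (W j).1) - ((X j).2 - (X j).1)|)
        (fun j => ((X j).2 - (X j).1)) s (K := M₁) (M := N₁) (C := N₂) hKii
      constructor <;> [skip; skip] <;> [linarith; linarith]
    · -- sᶜ ⊆ X-type-1 : Σ_{sᶜ} g ≤ N₁
      have hblk2 : ∀ j ∈ sᶜ, (0:ℝ) ≤ (X j).1 ∧ (X j).1 < (X j).2 ∧ (X j).2 ≤ N₁ := by
        intro j hj
        rcases concat_cases hγ₁ hγ₂ (hX j) with ⟨hm, hle⟩ | ⟨q, hq, heq, hgt⟩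
        · exact hγ₁.2.1 _ hm
        · exact absurd (hbr j hj) (not_le.2 hgt)
      have hsumg : ∑ j ∈ sᶜ, ((X j).2 - (X j).1) ≤ N₁ := by
        have := sumLen_finset_le X sᶜ hγ₁.1 hXm hblk2
        linarith
      have hKi : ∑ j ∈ sᶜ, (((W j).2 - (W j).1)
          - |((W j).2 - (W j).1) - ((X j).2 - (X j).1)|) ≤ N₁ := by
        refine le_trans (Finset.sum_le_sum (fun j _ => ?_)) hsumg
        have := le_abs_self (((W j).2 - (W j).1) - ((X j).2 - (X j).1))
        linarith
      have hKii : ∑ j ∈ sᶜ, (((X j).2 - (X j).1)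
          - |((W j).2 - (W j).1) - ((X j).2 - (X j).1)|) ≤ N₁ := by
        refine le_trans (Finset.sum_le_sum (fun j _ => ?_)) hsumg
        have := abs_nonneg (((W j).2 - (W j).1) - ((X j).2 - (X j).1))
        linarith
      have h1 := mass_aux (fun j => |((W j).2 - (W j).1) - ((X j).2 - (X j).1)|)
        (fun j => ((W j).2 - (W j).1)) s (K := N₁) (M := M₁) (C := M₂) hKi
      have h2 := mass_aux (fun j => |((W j).2 - (W j).1) - ((X j).2 - (X j).1)|)
        (fun j => ((X j).2 - (X j).1)) s (K := N₁) (M := N₁) (C := N₂) hKii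
      constructor <;> [skip; skip] <;> [linarith; linarith]
  refine max_le (max_le ?_ ?_) (max_le ?_ ?_)
  · rw [hsum_u, hsum_f]; exact hmass_i.1
  · rw [hsum_u, hsum_g]; exact hmass_i.2
  · refine Real.iSup_le ?_ (by linarith)
    intro k
    obtain ⟨q, hq, heq⟩ := hWq k
    obtain ⟨r, hr, heq'⟩ := hXq k
    have hbq := hβ₂.2.1 q hq
    have hbr' := hγ₂.2.1 r hr
    have hWj1 : (W (e k)).1 = q.1 + M₁ := by rw [heq]
    have hXj1 : (X (e k)).1 = r.1 + N₁ := by rw [heq']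
    have hA := diversity_concat_right hβ₁ hβ₂ hdβ₁ hdβ₂ (s := (W (e k)).1 - M₁)
      ⟨by linarith [hbq.1], by linarith [hbq.2.1, hbq.2.2]⟩
    have hB := diversity_concat_right hγ₁ hγ₂ hdγ₁ hdγ₂ (s := (X (e k)).1 - N₁)
      ⟨by linarith [hbr'.1], by linarith [hbr'.2.1, hbr'.2.2]⟩
    rw [show M₁ + ((W (e k)).1 - M₁) = (W (e k)).1 by ring] at hA
    rw [show N₁ + ((X (e k)).1 - N₁) = (X (e k)).1 by ring] at hB
    have hgoal : |diversity α β₂ (U' k).1 - diversity α γ₂ (V' k).1|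
        = |(diversity α (ipConcat M₁ β₁ β₂) (W (e k)).1
            - diversity α (ipConcat N₁ γ₁ γ₂) (X (e k)).1)
          - (diversity α β₁ M₁ - diversity α γ₁ N₁)| := by
      rw [hU', hV']
      simp only
      rw [hA, hB]
      congr 1
      ring
    rw [hgoal]
    have hle : |diversity α (ipConcat M₁ β₁ β₂) (W (e k)).1
        - diversity α (ipConcat N₁ γ₁ γ₂) (X (e k)).1|
        ≤ ⨆ j : Fin n, |diversity α (ipConcat M₁ β₁ β₂) (W j).1
          - diversity α (ipConcat N₁ γ₁ γ₂) (X j).1| :=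
      le_ciSup (f := fun j : Fin n => |diversity α (ipConcat M₁ β₁ β₂) (W j).1
        - diversity α (ipConcat N₁ γ₁ γ₂) (X j).1|)
        (Set.Finite.bddAbove (Set.finite_range _)) (e k)
    have hx_sup : (⨆ j : Fin n, |diversity α (ipConcat M₁ β₁ β₂) (W j).1
        - diversity α (ipConcat N₁ γ₁ γ₂) (X j).1|) ≤ x :=
      le_trans (le_max_left _ _) (le_max_right _ _)
    refine le_trans (abs_sub _ _) ?_
    linarith
  · have hA := diversity_concat_right hβ₁ hβ₂ hdβ₁ hdβ₂ (s := M₂) ⟨hβ₂.1, le_refl _⟩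
    have hB := diversity_concat_right hγ₁ hγ₂ hdγ₁ hdγ₂ (s := N₂) ⟨hγ₂.1, le_refl _⟩
    have heq : diversity α β₂ M₂ - diversity α γ₂ N₂
        = (diversity α (ipConcat M₁ β₁ β₂) (M₁ + M₂)
            - diversity α (ipConcat N₁ γ₁ γ₂) (N₁ + N₂))
          - (diversity α β₁ M₁ - diversity α γ₁ N₁) := by
      rw [hA, hB]; ring
    rw [heq]
    exact le_trans (abs_sub _ _) (add_le_add hx_iv hy_iv)

/-- For `α ∈ (0,1)` and interval partitions `β₁, β₂, γ₁, γ₂` with `α`-diversity,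
`|d_α(β₂,γ₂) - d_α(β₁,γ₁)| ≤ d_α(β₁⋆β₂, γ₁⋆γ₂) ≤ d_α(β₁,γ₁) + d_α(β₂,γ₂)`. -/
theorem dAlpha_concat_bound (α : ℝ) (hα : α ∈ Set.Ioo (0 : ℝ) 1)
    (M₁ M₂ N₁ N₂ : ℝ) (β₁ β₂ γ₁ γ₂ : Set (ℝ × ℝ))
    (hβ₁ : IsIntervalPartition M₁ β₁) (hβ₂ : IsIntervalPartition M₂ β₂)
    (hγ₁ : IsIntervalPartition N₁ γ₁) (hγ₂ : IsIntervalPartition N₂ γ₂)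
    (hdβ₁ : HasDiversity α M₁ β₁) (hdβ₂ : HasDiversity α M₂ β₂)
    (hdγ₁ : HasDiversity α N₁ γ₁) (hdγ₂ : HasDiversity α N₂ γ₂) :
    |dAlpha α M₂ N₂ β₂ γ₂ - dAlpha α M₁ N₁ β₁ γ₁| ≤
        dAlpha α (M₁ + M₂) (N₁ + N₂) (ipConcat M₁ β₁ β₂) (ipConcat N₁ γ₁ γ₂) ∧
      dAlpha α (M₁ + M₂) (N₁ + N₂) (ipConcat M₁ β₁ β₂) (ipConcat N₁ γ₁ γ₂) ≤
        dAlpha α M₁ N₁ β₁ γ₁ + dAlpha α M₂ N₂ β₂ γ₂ := by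
  constructor
  · rw [abs_sub_le_iff]
    constructor
    · rw [dAlpha_eq α (M₁ + M₂) (N₁ + N₂)]
      refine le_csInf (corrSet_nonempty _ _ _ _ _) (fun x hx => ?_)
      have h1 : dAlpha α M₂ N₂ β₂ γ₂ - x ≤ dAlpha α M₁ N₁ β₁ γ₁ := by
        rw [dAlpha_eq α M₁ N₁]
        refine le_csInf (corrSet_nonempty _ _ _ _ _) (fun y hy => ?_)
        have := dAlpha_second_le hβ₁ hβ₂ hγ₁ hγ₂ hdβ₁ hdβ₂ hdγ₁ hdγ₂ x hx y hy
        linarith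
      linarith
    · rw [dAlpha_eq α (M₁ + M₂) (N₁ + N₂)]
      refine le_csInf (corrSet_nonempty _ _ _ _ _) (fun x hx => ?_)
      have h1 : dAlpha α M₁ N₁ β₁ γ₁ - x ≤ dAlpha α M₂ N₂ β₂ γ₂ := by
        rw [dAlpha_eq α M₂ N₂]
        refine le_csInf (corrSet_nonempty _ _ _ _ _) (fun z hz => ?_)
        have := dAlpha_first_le hβ₁ hβ₂ hγ₁ hγ₂ hdβ₁ hdβ₂ hdγ₁ hdγ₂ x hx z hz
        linarith
      linarith
  · exact dAlpha_concat_le hβ₁ hβ₂ hγ₁ hγ₂ hdβ₁ hdβ₂ hdγ₁ hdγ₂
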